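/- Let ζ ∈ (0,1], τ > 0, β* ∈ ℝ^d, and let x_1, …, x_n ∈ ℝ^d be fixed vectors with ‖x_i‖_∞ ≤ L for all i. Let ε_1, …, ε_n be independent real random variables with E[ε_i] = 0 and (1/n)∑_{i=1}^n E|ε_i|^{1+ζ} = v_ζ < ∞, and set y_i = x_iᵀβ* + ε_i. Then there exists an absolute constant C > 0 such that for every t > 0, with probability at least 1 − 2d·e^{−t}, the gradient of the empirical Huber risk at β* satisfies ‖∇𝓛_τ(β*)‖_∞ ≤ C·( L·√(v_ζ · τ^{1−ζ} · t / n) + L·τ·t/n + L·v_ζ·τ^{−ζ} ). -/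

import Mathlib

open Real Finset MeasureTheory ProbabilityTheory

/-- Huber score function `ψ_τ(x) = sign(x) · min(|x|, τ)`. -/
noncomputable def psiTau (τ x : ℝ) : ℝ := Real.sign x * min |x| τ

lemma psiTau_eq_clamp {τ : ℝ} (hτ : 0 < τ) (x : ℝ) :
    psiTau τ x = max (-τ) (min x τ) := by
  rcases lt_trichotomy x 0 with hx | hx | hx
  · rw [psiTau, Real.sign_of_neg hx, abs_of_neg hx,
      min_eq_left (by linarith : x ≤ τ)]
    rcases le_total (-x) τ with h | h
    · rw [min_eq_left h, max_eq_right (by linarith)]; ring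
    · rw [min_eq_right h, max_eq_left (by linarith)]; ring
  · subst hx
    rw [psiTau, Real.sign_zero, zero_mul, min_eq_left hτ.le,
      max_eq_right (by linarith)]
  · have hmin : -τ ≤ min x τ := le_min (by linarith) (by linarith)
    rw [psiTau, Real.sign_of_pos hx, abs_of_pos hx, one_mul, max_eq_right hmin]

lemma measurable_psiTau {τ : ℝ} (hτ : 0 < τ) : Measurable (psiTau τ) := by
  have : psiTau τ = fun x => max (-τ) (min x τ) := funext (psiTau_eq_clamp hτ)
  rw [this]
  exact measurable_const.max (measurable_id.min measurable_const)

lemma abs_psiTau {τ : ℝ} (hτ : 0 < τ) (x : ℝ) : |psiTau τ x| = min |x| τ := by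
  have hmn : 0 ≤ min |x| τ := le_min (abs_nonneg x) hτ.le
  rcases lt_trichotomy x 0 with hx | hx | hx
  · rw [psiTau, Real.sign_of_neg hx, neg_one_mul, abs_neg, abs_of_nonneg hmn]
  · subst hx; simp [psiTau, hτ.le]
  · rw [psiTau, Real.sign_of_pos hx, one_mul, abs_of_nonneg hmn]

lemma abs_psiTau_le_tau {τ : ℝ} (hτ : 0 < τ) (x : ℝ) : |psiTau τ x| ≤ τ := by
  rw [abs_psiTau hτ]; exact min_le_right _ _

lemma psiTau_sq_le {τ ζ : ℝ} (hτ : 0 < τ) (hζ : 0 < ζ) (hζ1 : ζ ≤ 1) (x : ℝ) :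
    (psiTau τ x) ^ 2 ≤ τ ^ (1 - ζ) * |x| ^ (1 + ζ) := by
  rcases eq_or_ne x 0 with rfl | hx
  · simp [psiTau]
    positivity
  · set m : ℝ := min |x| τ with hm
    have hm0 : 0 < m := lt_min (abs_pos.2 hx) hτ
    have h1 : (psiTau τ x) ^ 2 = m ^ ((1:ℝ) - ζ) * m ^ ((1:ℝ) + ζ) := by
      rw [← Real.rpow_add hm0, ← sq_abs, abs_psiTau hτ, ← hm]
      norm_num
    rw [h1]
    apply mul_le_mul
    · exact Real.rpow_le_rpow hm0.le (min_le_right _ _) (by linarith)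
    · exact Real.rpow_le_rpow hm0.le (min_le_left _ _) (by linarith)
    · positivity
    · positivity

lemma abs_sub_psiTau {τ ζ : ℝ} (hτ : 0 < τ) (hζ : 0 < ζ) (x : ℝ) :
    |x - psiTau τ x| ≤ τ ^ (-ζ) * |x| ^ (1 + ζ) := by
  rcases le_or_gt |x| τ with h | h
  · have hψ : psiTau τ x = x := by
      rcases lt_trichotomy x 0 with hx | hx | hx
      · rw [psiTau, Real.sign_of_neg hx, min_eq_left h, abs_of_neg hx]; ring
      · subst hx; simp [psiTau]
      · rw [psiTau, Real.sign_of_pos hx, min_eq_left h, abs_of_pos hx, one_mul]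
    rw [hψ, sub_self, abs_zero]
    positivity
  · have habs : |x - psiTau τ x| = |x| - τ := by
      rcases lt_trichotomy x 0 with hx | hx | hx
      · rw [psiTau, Real.sign_of_neg hx, min_eq_right h.le, abs_of_neg hx] at *
        rw [abs_of_nonpos (by linarith)]; ring
      · subst hx; simp at h; linarith
      · rw [psiTau, Real.sign_of_pos hx, min_eq_right h.le, one_mul,
          abs_of_pos hx] at *
        rw [abs_of_nonneg (by linarith)]
    rw [habs]
    have hx0 : 0 < |x| := lt_trans hτ h
    have h3 : |x| = τ ^ (-ζ) * (τ ^ ζ * |x|) := by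
      rw [← mul_assoc, ← Real.rpow_add hτ]; simp
    calc |x| - τ ≤ |x| := by linarith
      _ = τ ^ (-ζ) * (τ ^ ζ * |x|) := h3
      _ ≤ τ ^ (-ζ) * (|x| ^ ζ * |x|) := by
          apply mul_le_mul_of_nonneg_left _ (by positivity)
          apply mul_le_mul_of_nonneg_right _ (abs_nonneg x)
          exact Real.rpow_le_rpow hτ.le h.le hζ.le
      _ = τ ^ (-ζ) * |x| ^ (1 + ζ) := by
          rw [Real.rpow_add hx0, Real.rpow_one]
          ring

lemma exp_le_quadratic {x : ℝ} (hx : |x| ≤ 1) : Real.exp x ≤ 1 + x + x ^ 2 := by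
  have h := Real.exp_bound hx (by norm_num : 0 < 2)
  have hsum : ∑ i ∈ Finset.range 2, x ^ i / (Nat.factorial i : ℝ) = 1 + x := by
    simp [Finset.sum_range_succ]
  rw [hsum] at h
  have h2 : Real.exp x - (1 + x) ≤ |x| ^ 2 * ((2 + 1 : ℕ) / ((Nat.factorial 2 : ℝ) * 2)) :=
    le_trans (le_abs_self _) h
  have : |x| ^ 2 = x ^ 2 := sq_abs x
  rw [this] at h2
  norm_num [Nat.factorial] at h2
  nlinarith [sq_nonneg x]

lemma mgf_le_of_bounded {Ω : Type} [MeasurableSpace Ω] {μ : Measure Ω}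
    [IsProbabilityMeasure μ] {Z : Ω → ℝ} {M lam : ℝ} (hM : 0 ≤ M)
    (hmeas : Measurable Z) (hbdd : ∀ ω, |Z ω| ≤ M)
    (hmean : ∫ ω, Z ω ∂μ = 0) (hlam : 0 ≤ lam) (hlamM : lam * M ≤ 1) :
    mgf Z μ lam ≤ Real.exp (lam ^ 2 * ∫ ω, (Z ω) ^ 2 ∂μ) := by
  have hZint : Integrable Z μ := by
    refine (integrable_const M).mono' hmeas.aestronglyMeasurable ?_
    exact Filter.Eventually.of_forall fun ω => by simpa using hbdd ω
  have hZ2int : Integrable (fun ω => (Z ω) ^ 2) μ := by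
    refine (integrable_const (M ^ 2)).mono' (hmeas.pow_const 2).aestronglyMeasurable ?_
    refine Filter.Eventually.of_forall fun ω => ?_
    rw [Real.norm_eq_abs, abs_pow]
    exact pow_le_pow_left₀ (abs_nonneg _) (hbdd ω) 2
  have hsmall : ∀ ω, |lam * Z ω| ≤ 1 := fun ω => by
    rw [abs_mul, abs_of_nonneg hlam]
    exact le_trans (mul_le_mul_of_nonneg_left (hbdd ω) hlam) hlamM
  have hexpint : Integrable (fun ω => Real.exp (lam * Z ω)) μ := by
    refine (integrable_const (Real.exp 1)).mono'
      ((hmeas.const_mul lam).exp).aestronglyMeasurable ?_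
    refine Filter.Eventually.of_forall fun ω => ?_
    rw [Real.norm_eq_abs, abs_of_nonneg (Real.exp_nonneg _)]
    exact Real.exp_le_exp.2 (le_trans (le_abs_self _) (hsmall ω))
  have hpt : ∀ ω, Real.exp (lam * Z ω) ≤ 1 + lam * Z ω + lam ^ 2 * (Z ω) ^ 2 := by
    intro ω
    have := exp_le_quadratic (hsmall ω)
    calc Real.exp (lam * Z ω) ≤ 1 + lam * Z ω + (lam * Z ω) ^ 2 := this
      _ = 1 + lam * Z ω + lam ^ 2 * (Z ω) ^ 2 := by ring
  have hrhsint : Integrable (fun ω => 1 + lam * Z ω + lam ^ 2 * (Z ω) ^ 2) μ :=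
    ((integrable_const 1).add (hZint.const_mul lam)).add (hZ2int.const_mul (lam ^ 2))
  have hint : mgf Z μ lam ≤ ∫ ω, (1 + lam * Z ω + lam ^ 2 * (Z ω) ^ 2) ∂μ := by
    rw [mgf]
    exact integral_mono hexpint hrhsint hpt
  have hcalc : ∫ ω, (1 + lam * Z ω + lam ^ 2 * (Z ω) ^ 2) ∂μ
      = 1 + lam ^ 2 * ∫ ω, (Z ω) ^ 2 ∂μ := by
    have i1 : Integrable (fun _ : Ω => (1 : ℝ)) μ := integrable_const 1
    have i2 : Integrable (fun ω => lam * Z ω) μ := hZint.const_mul lam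
    have i3 : Integrable (fun ω => lam ^ 2 * (Z ω) ^ 2) μ := hZ2int.const_mul (lam ^ 2)
    have i12 : Integrable (fun ω => 1 + lam * Z ω) μ := i1.add i2
    rw [integral_add i12 i3, integral_add i1 i2,
      integral_const, integral_const_mul, integral_const_mul, hmean]
    simp
  rw [hcalc] at hint
  calc mgf Z μ lam ≤ 1 + lam ^ 2 * ∫ ω, (Z ω) ^ 2 ∂μ := hint
    _ ≤ Real.exp (lam ^ 2 * ∫ ω, (Z ω) ^ 2 ∂μ) := by
        have := Real.add_one_le_exp (lam ^ 2 * ∫ ω, (Z ω) ^ 2 ∂μ)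
        linarith

lemma bernstein_tail {Ω : Type} [MeasurableSpace Ω] {μ : Measure Ω}
    [IsProbabilityMeasure μ] {n : ℕ} {Z : Fin n → Ω → ℝ} {M : ℝ} (hM : 0 < M)
    (hmeas : ∀ i, Measurable (Z i)) (hbdd : ∀ i ω, |Z i ω| ≤ M)
    (hmean : ∀ i, ∫ ω, Z i ω ∂μ = 0)
    (hindep : iIndepFun Z μ)
    {V t : ℝ} (hV : ∑ i, ∫ ω, (Z i ω) ^ 2 ∂μ ≤ V) (ht : 0 < t) :
    (μ {ω | 2 * Real.sqrt (V * t) + 2 * M * t ≤ ∑ i, Z i ω}).toReal ≤ Real.exp (-t) := by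
  set q : ℝ := 2 * Real.sqrt (V * t) + 2 * M * t with hq
  have hV0 : 0 ≤ V :=
    le_trans (Finset.sum_nonneg fun i _ => integral_nonneg fun ω => sq_nonneg _) hV
  -- main step for any admissible lam
  have key : ∀ lam : ℝ, 0 ≤ lam → lam * M ≤ 1 →
      (μ {ω | q ≤ ∑ i, Z i ω}).toReal ≤ Real.exp (-lam * q + lam ^ 2 * V) := by
    intro lam hlam hlamM
    have hexpint : ∀ i, Integrable (fun ω => Real.exp (lam * Z i ω)) μ := by
      intro i
      refine (integrable_const (Real.exp 1)).mono'
        (((hmeas i).const_mul lam).exp).aestronglyMeasurable ?_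
      refine Filter.Eventually.of_forall fun ω => ?_
      rw [Real.norm_eq_abs, abs_of_nonneg (Real.exp_nonneg _)]
      refine Real.exp_le_exp.2 (le_trans (le_abs_self _) ?_)
      rw [abs_mul, abs_of_nonneg hlam]
      exact le_trans (mul_le_mul_of_nonneg_left (hbdd i ω) hlam) hlamM
    have hintsum : Integrable (fun ω => Real.exp (lam * (∑ i, Z i) ω)) μ :=
      hindep.integrable_exp_mul_sum hmeas (fun i _ => hexpint i)
    have hset : {ω | q ≤ ∑ i, Z i ω} = {ω | q ≤ (∑ i, Z i) ω} := by
      ext ω; simp [Finset.sum_apply]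
    have hchern := measure_ge_le_exp_mul_mgf (X := ∑ i, Z i) (μ := μ) q hlam hintsum
    rw [hset]
    refine le_trans hchern ?_
    rw [Real.exp_add]
    apply mul_le_mul_of_nonneg_left _ (Real.exp_nonneg _)
    rw [hindep.mgf_sum hmeas]
    calc ∏ i, mgf (Z i) μ lam
        ≤ ∏ i, Real.exp (lam ^ 2 * ∫ ω, (Z i ω) ^ 2 ∂μ) := by
          refine Finset.prod_le_prod (fun i _ => mgf_nonneg) fun i _ =>
            mgf_le_of_bounded hM.le (hmeas i) (hbdd i) (hmean i) hlam hlamM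
      _ = Real.exp (lam ^ 2 * ∑ i, ∫ ω, (Z i ω) ^ 2 ∂μ) := by
          rw [← Real.exp_sum, Finset.mul_sum]
      _ ≤ Real.exp (lam ^ 2 * V) := by
          exact Real.exp_le_exp.2 (mul_le_mul_of_nonneg_left hV (sq_nonneg _))
  by_cases hcase : V ≤ M ^ 2 * t
  · -- lam = 1 / M
    have h1 := key (1 / M) (by positivity) (by field_simp; exact le_rfl)
    refine le_trans h1 (Real.exp_le_exp.2 ?_)
    have hs : 0 ≤ Real.sqrt (V * t) := Real.sqrt_nonneg _
    have e1 : (1 / M) * (2 * M * t) = 2 * t := by field_simp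
    have e2 : (1 / M) ^ 2 * (M ^ 2 * t) = t := by field_simp
    have e3 : (1 / M) ^ 2 * V ≤ t := by
      calc (1 / M) ^ 2 * V ≤ (1 / M) ^ 2 * (M ^ 2 * t) :=
            mul_le_mul_of_nonneg_left hcase (by positivity)
        _ = t := e2
    have e4 : 2 * t ≤ (1 / M) * q := by
      have h7 : 0 ≤ (1 / M) * (2 * Real.sqrt (V * t)) := by positivity
      rw [hq, mul_add, e1]
      linarith
    linarith
  · -- lam = sqrt (t / V)
    push_neg at hcase
    have hVpos : 0 < V := by nlinarith
    set lam : ℝ := Real.sqrt (t / V) with hlam_def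
    have hlam0 : 0 ≤ lam := Real.sqrt_nonneg _
    have hlamM : lam * M ≤ 1 := by
      have h5 : t / V ≤ 1 / M ^ 2 := by
        rw [div_le_div_iff₀ hVpos (by positivity)]
        nlinarith
      have h6 : lam ≤ 1 / M := by
        rw [hlam_def]
        calc Real.sqrt (t / V) ≤ Real.sqrt (1 / M ^ 2) := Real.sqrt_le_sqrt h5
          _ = 1 / M := by
              rw [one_div, Real.sqrt_inv, Real.sqrt_sq hM.le, one_div]
      calc lam * M ≤ (1 / M) * M := mul_le_mul_of_nonneg_right h6 hM.le
        _ = 1 := by field_simp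
    have h1 := key lam hlam0 hlamM
    refine le_trans h1 (Real.exp_le_exp.2 ?_)
    have hsq : lam ^ 2 = t / V := Real.sq_sqrt (by positivity)
    have hlv : lam ^ 2 * V = t := by rw [hsq]; field_simp
    have hls : lam * Real.sqrt (V * t) = t := by
      rw [hlam_def, ← Real.sqrt_mul (by positivity) (V * t)]
      rw [show t / V * (V * t) = t ^ 2 by field_simp]
      exact Real.sqrt_sq ht.le
    have hlMt : 0 ≤ lam * (2 * M * t) := by positivity
    rw [hq]
    nlinarith

/-- ℓ∞ bound on the gradient of the empirical Huber risk at the true parameter: for fixed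
covariates with `‖xᵢ‖_∞ ≤ L` and independent zero-mean noise with average `(1+ζ)`-th
moment `v_ζ`, there is an absolute constant `C > 0` such that for every `t > 0`, with
probability at least `1 − 2d·e^{−t}`,
`‖∇𝓛_τ(β*)‖_∞ ≤ C(L√(v_ζ τ^{1−ζ} t/n) + Lτt/n + L v_ζ τ^{−ζ})`. -/
theorem huber_gradient_linf_concentration :
    ∃ C : ℝ, 0 < C ∧
    ∀ (d n : ℕ) (ζ τ L vζ : ℝ) (βstar : Fin d → ℝ)
      (x : Fin n → Fin d → ℝ)
      (Ω : Type) (_mΩ : MeasurableSpace Ω) (μ : Measure Ω)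
      (ε : Fin n → Ω → ℝ),
      IsProbabilityMeasure μ →
      1 ≤ n → ζ ∈ Set.Ioc (0 : ℝ) 1 → 0 < τ → 0 < L →
      (∀ i j, |x i j| ≤ L) →
      (∀ i, Measurable (ε i)) →
      iIndepFun ε μ →
      (∀ i, Integrable (ε i) μ) →
      (∀ i, Integrable (fun ω => |ε i ω| ^ (1 + ζ)) μ) →
      (∀ i, ∫ ω, ε i ω ∂μ = 0) →
      (1 / (n : ℝ)) * ∑ i, ∫ ω, |ε i ω| ^ (1 + ζ) ∂μ = vζ →
      ∀ t : ℝ, 0 < t →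
        1 - 2 * (d : ℝ) * Real.exp (-t) ≤
          (μ {ω | ∀ j : Fin d,
            |-(1 / (n : ℝ)) *
                ∑ i, psiTau τ ((∑ k, x i k * βstar k) + ε i ω - ∑ k, x i k * βstar k) *
                  x i j| ≤
              C * (L * Real.sqrt (vζ * τ ^ (1 - ζ) * t / n) + L * τ * t / n
                + L * vζ * τ ^ (-ζ))}).toReal := by
  refine ⟨4, by norm_num, ?_⟩
  intro d n ζ τ L vζ βstar x Ω _mΩ μ ε hprob hn hζmem hτ hL hx hεmeas hεindep hεint
    h1ζint hεmean hv t ht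
  obtain ⟨hζ0, hζ1⟩ := hζmem
  have hn0 : (0 : ℝ) < n := by exact_mod_cast hn
  have hne : (n : ℝ) ≠ 0 := ne_of_gt hn0
  set m : Fin n → ℝ := fun i => ∫ ω, |ε i ω| ^ (1 + ζ) ∂μ with hm_def
  have hm0 : ∀ i, 0 ≤ m i := fun i =>
    integral_nonneg fun ω => Real.rpow_nonneg (abs_nonneg _) _
  have hsum_m : ∑ i, m i = n * vζ := by
    rw [← hv]; field_simp
  have hvζ0 : 0 ≤ vζ := by
    have h := Finset.sum_nonneg (fun i (_ : i ∈ Finset.univ) => hm0 i)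
    rw [hsum_m] at h
    nlinarith
  have hτζ : (0 : ℝ) ≤ τ ^ (1 - ζ) := Real.rpow_nonneg hτ.le _
  have hτnζ : (0 : ℝ) ≤ τ ^ (-ζ) := Real.rpow_nonneg hτ.le _
  set Y : Fin n → Fin d → Ω → ℝ := fun i j ω => psiTau τ (ε i ω) * x i j with hY_def
  have hYmeas : ∀ i j, Measurable (Y i j) := fun i j =>
    ((measurable_psiTau hτ).comp (hεmeas i)).mul_const _
  have hYbdd : ∀ i j ω, |Y i j ω| ≤ L * τ := by
    intro i j ω
    simp only [hY_def]
    calc |psiTau τ (ε i ω) * x i j| = |psiTau τ (ε i ω)| * |x i j| := abs_mul _ _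
      _ ≤ τ * L := mul_le_mul (abs_psiTau_le_tau hτ _) (hx i j) (abs_nonneg _) hτ.le
      _ = L * τ := mul_comm _ _
  have hYint : ∀ i j, Integrable (Y i j) μ := by
    intro i j
    refine (integrable_const (L * τ)).mono' (hYmeas i j).aestronglyMeasurable ?_
    exact Filter.Eventually.of_forall fun ω => by simpa using hYbdd i j ω
  set c : Fin n → Fin d → ℝ := fun i j => ∫ ω, Y i j ω ∂μ with hc_def
  have hc' : ∀ i j, ∫ ω, Y i j ω ∂μ = c i j := fun i j => rfl
  -- bias bound
  have hφint : ∀ i j, Integrable (fun ω => (psiTau τ (ε i ω) - ε i ω) * x i j) μ := by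
    intro i j
    have : (fun ω => (psiTau τ (ε i ω) - ε i ω) * x i j)
        = fun ω => Y i j ω - ε i ω * x i j := by
      funext ω; simp only [hY_def]; ring
    rw [this]
    exact (hYint i j).sub ((hεint i).mul_const _)
  have hcm : ∀ i j, |c i j| ≤ L * τ ^ (-ζ) * m i := by
    intro i j
    have hsplit : ∫ ω, Y i j ω ∂μ
        = (∫ ω, (psiTau τ (ε i ω) - ε i ω) * x i j ∂μ) + (∫ ω, ε i ω ∂μ) * x i j := by
      rw [← integral_mul_const, ← integral_add (hφint i j) ((hεint i).mul_const _)]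
      congr 1; funext ω; simp only [hY_def]; ring
    rw [hεmean i, zero_mul, add_zero] at hsplit
    have h1 : |c i j| = |∫ ω, (psiTau τ (ε i ω) - ε i ω) * x i j ∂μ| := by
      rw [← hc' i j, hsplit]
    rw [h1]
    calc |∫ ω, (psiTau τ (ε i ω) - ε i ω) * x i j ∂μ|
        ≤ ∫ ω, |(psiTau τ (ε i ω) - ε i ω) * x i j| ∂μ := by
          simpa only [Real.norm_eq_abs] using
            norm_integral_le_integral_norm (fun ω => (psiTau τ (ε i ω) - ε i ω) * x i j) (μ := μ)
      _ ≤ ∫ ω, L * τ ^ (-ζ) * |ε i ω| ^ (1 + ζ) ∂μ := by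
          refine integral_mono (hφint i j).abs ((h1ζint i).const_mul _) fun ω => ?_
          rw [abs_mul, abs_sub_comm]
          calc |ε i ω - psiTau τ (ε i ω)| * |x i j|
              ≤ (τ ^ (-ζ) * |ε i ω| ^ (1 + ζ)) * L := by
                refine mul_le_mul (abs_sub_psiTau hτ hζ0 _) (hx i j) (abs_nonneg _) ?_
                positivity
            _ = L * τ ^ (-ζ) * |ε i ω| ^ (1 + ζ) := by ring
      _ = L * τ ^ (-ζ) * m i := by rw [integral_const_mul]
  -- second moment bound
  have hY2int : ∀ i j, Integrable (fun ω => (Y i j ω) ^ 2) μ := by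
    intro i j
    refine (integrable_const ((L * τ) ^ 2)).mono'
      ((hYmeas i j).pow_const 2).aestronglyMeasurable ?_
    refine Filter.Eventually.of_forall fun ω => ?_
    rw [Real.norm_eq_abs, abs_pow]
    exact pow_le_pow_left₀ (abs_nonneg _) (hYbdd i j ω) 2
  have hZ2 : ∀ i j, ∫ ω, (Y i j ω - c i j) ^ 2 ∂μ ≤ L ^ 2 * τ ^ (1 - ζ) * m i := by
    intro i j
    have hY2 : ∫ ω, (Y i j ω) ^ 2 ∂μ ≤ L ^ 2 * τ ^ (1 - ζ) * m i := by
      refine le_trans (integral_mono (hY2int i j)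
        ((h1ζint i).const_mul (L ^ 2 * τ ^ (1 - ζ))) fun ω => ?_) ?_
      · simp only [hY_def]
        calc (psiTau τ (ε i ω) * x i j) ^ 2
            = (psiTau τ (ε i ω)) ^ 2 * (x i j) ^ 2 := by ring
          _ ≤ (τ ^ (1 - ζ) * |ε i ω| ^ (1 + ζ)) * L ^ 2 := by
              refine mul_le_mul (psiTau_sq_le hτ hζ0 hζ1 _) ?_ (sq_nonneg _) ?_
              · rw [← sq_abs]
                exact pow_le_pow_left₀ (abs_nonneg _) (hx i j) 2
              · positivity
          _ = L ^ 2 * τ ^ (1 - ζ) * |ε i ω| ^ (1 + ζ) := by ring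
      · rw [integral_const_mul]
    have hexp : ∫ ω, (Y i j ω - c i j) ^ 2 ∂μ
        = (∫ ω, (Y i j ω) ^ 2 ∂μ) - (c i j) ^ 2 := by
      have e : (fun ω => (Y i j ω - c i j) ^ 2)
          = fun ω => ((Y i j ω) ^ 2 - (2 * c i j) * Y i j ω) + (c i j) ^ 2 := by
        funext ω; ring
      have i1 : Integrable (fun ω => (Y i j ω) ^ 2 - (2 * c i j) * Y i j ω) μ :=
        (hY2int i j).sub ((hYint i j).const_mul _)
      rw [e, integral_add i1 (integrable_const _),
        integral_sub (hY2int i j) ((hYint i j).const_mul _), integral_const_mul,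
        integral_const, hc' i j]
      simp
      ring
    rw [hexp]
    nlinarith [sq_nonneg (c i j)]
  -- Bernstein per coordinate and sign
  have hM2 : (0 : ℝ) < 2 * (L * τ) := by positivity
  set V : ℝ := L ^ 2 * τ ^ (1 - ζ) * (n * vζ) with hV_def
  set q : ℝ := 2 * Real.sqrt (V * t) + 2 * (2 * (L * τ)) * t with hq_def
  have main : ∀ (j : Fin d) (σ : ℝ), |σ| = 1 →
      (μ {ω | q ≤ ∑ i, σ * (Y i j ω - c i j)}).toReal ≤ Real.exp (-t) := by
    intro j σ hσ
    have hσsq : σ ^ 2 = 1 := by rw [← sq_abs, hσ, one_pow]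
    set Z : Fin n → Ω → ℝ :=
      fun i => (fun z => σ * (psiTau τ z * x i j - c i j)) ∘ ε i with hZ_def
    have hgmeas : ∀ i, Measurable (fun z => σ * (psiTau τ z * x i j - c i j)) := fun i =>
      (((measurable_psiTau hτ).mul_const _).sub_const _).const_mul σ
    have hZmeas : ∀ i, Measurable (Z i) := fun i => (hgmeas i).comp (hεmeas i)
    have hZindep : iIndepFun Z μ := hεindep.comp _ hgmeas
    have hZbdd : ∀ i ω, |Z i ω| ≤ 2 * (L * τ) := by
      intro i ω
      simp only [hZ_def, Function.comp_apply, abs_mul, hσ, one_mul]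
      have h1 : |psiTau τ (ε i ω) * x i j - c i j|
          ≤ |psiTau τ (ε i ω) * x i j| + |c i j| := abs_sub _ _
      have h2 : |psiTau τ (ε i ω) * x i j| ≤ L * τ := hYbdd i j ω
      have h3 : |c i j| ≤ L * τ := by
        rw [← hc' i j]
        calc |∫ ω, Y i j ω ∂μ| ≤ ∫ ω, |Y i j ω| ∂μ := by
              simpa only [Real.norm_eq_abs] using
                norm_integral_le_integral_norm (fun ω => Y i j ω) (μ := μ)
          _ ≤ ∫ _ω, L * τ ∂μ :=
              integral_mono (hYint i j).abs (integrable_const _) fun ω => hYbdd i j ω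
          _ = L * τ := by simp
      linarith
    have hZmean : ∀ i, ∫ ω, Z i ω ∂μ = 0 := by
      intro i
      simp only [hZ_def, Function.comp_apply]
      rw [integral_const_mul]
      have : ∫ ω, (psiTau τ (ε i ω) * x i j - c i j) ∂μ = 0 := by
        have hYi : (fun ω => psiTau τ (ε i ω) * x i j) = Y i j := by
          funext ω; simp only [hY_def]
        rw [show (fun ω => psiTau τ (ε i ω) * x i j - c i j)
            = fun ω => Y i j ω - c i j from by funext ω; simp only [hY_def]]
        rw [integral_sub (hYint i j) (integrable_const _), integral_const, hc' i j]
        simp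
      rw [this, mul_zero]
    have hZvar : ∑ i, ∫ ω, (Z i ω) ^ 2 ∂μ ≤ V := by
      have heq : ∀ i : Fin n, ∫ ω, (Z i ω) ^ 2 ∂μ = ∫ ω, (Y i j ω - c i j) ^ 2 ∂μ := by
        intro i
        congr 1
        funext ω
        simp only [hZ_def, Function.comp_apply, hY_def]
        ring_nf
        rw [hσsq]
        ring
      calc ∑ i, ∫ ω, (Z i ω) ^ 2 ∂μ = ∑ i, ∫ ω, (Y i j ω - c i j) ^ 2 ∂μ :=
            Finset.sum_congr rfl fun i _ => heq i
        _ ≤ ∑ i, L ^ 2 * τ ^ (1 - ζ) * m i :=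
            Finset.sum_le_sum fun i _ => hZ2 i j
        _ = L ^ 2 * τ ^ (1 - ζ) * ∑ i, m i := by rw [Finset.mul_sum]
        _ = V := by rw [hsum_m, hV_def]
    have hbern := bernstein_tail hM2 hZmeas hZbdd hZmean hZindep hZvar ht
    have hsets : {ω | q ≤ ∑ i, σ * (Y i j ω - c i j)}
        = {ω | 2 * Real.sqrt (V * t) + 2 * (2 * (L * τ)) * t ≤ ∑ i, Z i ω} := by
      ext ω
      simp only [Set.mem_setOf_eq, hZ_def, Function.comp_apply, hY_def, hq_def]
    rw [hsets]
    exact hbern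
  -- the good event
  set B : ℝ := 4 * (L * Real.sqrt (vζ * τ ^ (1 - ζ) * t / n) + L * τ * t / n
      + L * vζ * τ ^ (-ζ)) with hB_def
  have hu0 : 0 ≤ vζ * τ ^ (1 - ζ) * t / n :=
    div_nonneg (mul_nonneg (mul_nonneg hvζ0 hτζ) ht.le) hn0.le
  have hs0 : 0 ≤ L * Real.sqrt (vζ * τ ^ (1 - ζ) * t / n) := by positivity
  have hsqrtV : Real.sqrt (V * t) = n * (L * Real.sqrt (vζ * τ ^ (1 - ζ) * t / n)) := by
    rw [show V * t = (n * (L * Real.sqrt (vζ * τ ^ (1 - ζ) * t / n))) ^ 2 from ?_,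
      Real.sqrt_sq (by positivity)]
    rw [mul_pow, mul_pow, Real.sq_sqrt hu0, hV_def]
    field_simp
  -- pointwise deduction
  have hpoint : ∀ (j : Fin d) (ω : Ω),
      (∑ i, (Y i j ω - c i j)) < q → (∑ i, -(Y i j ω - c i j)) < q →
      |-(1 / (n : ℝ)) * ∑ i, Y i j ω| ≤ B := by
    intro j ω hp hm'
    have hsub : ∑ i, (Y i j ω - c i j) = (∑ i, Y i j ω) - ∑ i, c i j :=
      Finset.sum_sub_distrib _ _
    have hneg : ∑ i, -(Y i j ω - c i j) = -((∑ i, Y i j ω) - ∑ i, c i j) := by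
      rw [Finset.sum_neg_distrib, hsub]
    rw [hsub] at hp
    rw [hneg] at hm'
    have habs1 : |(∑ i, Y i j ω) - ∑ i, c i j| ≤ q := abs_le.2 ⟨by linarith, hp.le⟩
    have habs2 : |∑ i, c i j| ≤ L * τ ^ (-ζ) * (n * vζ) := by
      calc |∑ i, c i j| ≤ ∑ i, |c i j| := Finset.abs_sum_le_sum_abs _ _
        _ ≤ ∑ i, L * τ ^ (-ζ) * m i := Finset.sum_le_sum fun i _ => hcm i j
        _ = L * τ ^ (-ζ) * ∑ i, m i := by rw [Finset.mul_sum]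
        _ = L * τ ^ (-ζ) * (n * vζ) := by rw [hsum_m]
    have habs3 : |∑ i, Y i j ω| ≤ q + L * τ ^ (-ζ) * (n * vζ) := by
      calc |∑ i, Y i j ω| = |((∑ i, Y i j ω) - ∑ i, c i j) + ∑ i, c i j| := by ring_nf
        _ ≤ |(∑ i, Y i j ω) - ∑ i, c i j| + |∑ i, c i j| := abs_add_le _ _
        _ ≤ q + L * τ ^ (-ζ) * (n * vζ) := add_le_add habs1 habs2
    have habs4 : |-(1 / (n : ℝ)) * ∑ i, Y i j ω|
        = (1 / n) * |∑ i, Y i j ω| := by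
      rw [abs_mul, abs_neg, abs_of_nonneg (by positivity : (0:ℝ) ≤ 1 / (n:ℝ))]
    rw [habs4]
    have hexpand : (1 / (n : ℝ)) * (q + L * τ ^ (-ζ) * (n * vζ))
        = 2 * (L * Real.sqrt (vζ * τ ^ (1 - ζ) * t / n)) + 4 * (L * τ * t) / n
          + L * vζ * τ ^ (-ζ) := by
      rw [hq_def, hsqrtV]
      field_simp
      ring
    have h5 : (1 / (n : ℝ)) * |∑ i, Y i j ω|
        ≤ (1 / (n : ℝ)) * (q + L * τ ^ (-ζ) * (n * vζ)) :=
      mul_le_mul_of_nonneg_left habs3 (by positivity)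
    rw [hexpand] at h5
    have hLv : 0 ≤ L * vζ * τ ^ (-ζ) := by positivity
    have hLt : 0 ≤ L * τ * t / n := by positivity
    rw [hB_def]
    calc (1 / (n : ℝ)) * |∑ i, Y i j ω|
        ≤ 2 * (L * Real.sqrt (vζ * τ ^ (1 - ζ) * t / n)) + 4 * (L * τ * t) / n
          + L * vζ * τ ^ (-ζ) := h5
      _ ≤ 4 * (L * Real.sqrt (vζ * τ ^ (1 - ζ) * t / n) + L * τ * t / n
          + L * vζ * τ ^ (-ζ)) := by
          have : 4 * (L * τ * t) / n = 4 * (L * τ * t / n) := by ring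
          linarith
  -- identify the statement's set
  have hsetG : {ω | ∀ j : Fin d,
      |-(1 / (n : ℝ)) *
          ∑ i, psiTau τ ((∑ k, x i k * βstar k) + ε i ω - ∑ k, x i k * βstar k) *
            x i j| ≤
        (4 : ℝ) * (L * Real.sqrt (vζ * τ ^ (1 - ζ) * t / n) + L * τ * t / n
          + L * vζ * τ ^ (-ζ))}
      = {ω | ∀ j : Fin d, |-(1 / (n : ℝ)) * ∑ i, Y i j ω| ≤ B} := by
    ext ω
    simp only [Set.mem_setOf_eq, add_sub_cancel_left, hY_def, hB_def]
  rw [hsetG]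
  set G : Set Ω := {ω | ∀ j : Fin d, |-(1 / (n : ℝ)) * ∑ i, Y i j ω| ≤ B} with hG_def
  set Bad : Fin d → Set Ω := fun j =>
    {ω | q ≤ ∑ i, (Y i j ω - c i j)} ∪ {ω | q ≤ ∑ i, -(Y i j ω - c i j)} with hBad_def
  have hGc : Gᶜ ⊆ ⋃ j, Bad j := by
    intro ω hω
    simp only [hG_def, Set.mem_compl_iff, Set.mem_setOf_eq, not_forall] at hω
    obtain ⟨j, hj⟩ := hω
    refine Set.mem_iUnion.2 ⟨j, ?_⟩
    by_contra hbad
    simp only [hBad_def, Set.mem_union, Set.mem_setOf_eq, not_or, not_le] at hbad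
    exact hj (hpoint j ω hbad.1 hbad.2)
  have hBadBound : ∀ j, (μ (Bad j)).toReal ≤ 2 * Real.exp (-t) := by
    intro j
    have h1 : (μ {ω | q ≤ ∑ i, (Y i j ω - c i j)}).toReal ≤ Real.exp (-t) := by
      have := main j 1 (by norm_num)
      simpa using this
    have h2 : (μ {ω | q ≤ ∑ i, -(Y i j ω - c i j)}).toReal ≤ Real.exp (-t) := by
      have := main j (-1) (by norm_num)
      have hs : {ω | q ≤ ∑ i, (-1 : ℝ) * (Y i j ω - c i j)}
          = {ω | q ≤ ∑ i, -(Y i j ω - c i j)} := by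
        ext ω; simp
      rwa [hs] at this
    have hun : (μ (Bad j)).toReal
        ≤ (μ {ω | q ≤ ∑ i, (Y i j ω - c i j)}).toReal
          + (μ {ω | q ≤ ∑ i, -(Y i j ω - c i j)}).toReal := by
      rw [← ENNReal.toReal_add (measure_ne_top μ _) (measure_ne_top μ _)]
      refine ENNReal.toReal_mono ?_ (measure_union_le _ _)
      exact ENNReal.add_ne_top.2 ⟨measure_ne_top μ _, measure_ne_top μ _⟩
    linarith
  have hGcBound : (μ Gᶜ).toReal ≤ 2 * d * Real.exp (-t) := by
    have h1 : μ Gᶜ ≤ ∑ j, μ (Bad j) :=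
      le_trans (measure_mono hGc) (measure_iUnion_fintype_le μ Bad)
    have h2 : (μ Gᶜ).toReal ≤ (∑ j, μ (Bad j)).toReal :=
      ENNReal.toReal_mono (ENNReal.sum_ne_top.2 fun j _ => measure_ne_top μ _) h1
    rw [ENNReal.toReal_sum (fun j _ => measure_ne_top μ _)] at h2
    calc (μ Gᶜ).toReal ≤ ∑ j, (μ (Bad j)).toReal := h2
      _ ≤ ∑ _j : Fin d, 2 * Real.exp (-t) :=
          Finset.sum_le_sum fun j _ => hBadBound j
      _ = 2 * d * Real.exp (-t) := by
          rw [Finset.sum_const, Finset.card_univ, Fintype.card_fin, nsmul_eq_mul]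
          ring
  have h1le : (1 : ℝ) ≤ (μ G).toReal + (μ Gᶜ).toReal := by
    have h := measure_union_le (μ := μ) G Gᶜ
    rw [Set.union_compl_self] at h
    have h2 : ((μ G + μ Gᶜ)).toReal = (μ G).toReal + (μ Gᶜ).toReal :=
      ENNReal.toReal_add (measure_ne_top μ _) (measure_ne_top μ _)
    calc (1 : ℝ) = (μ Set.univ).toReal := by simp
      _ ≤ ((μ G + μ Gᶜ)).toReal :=
          ENNReal.toReal_mono
            (ENNReal.add_ne_top.2 ⟨measure_ne_top μ _, measure_ne_top μ _⟩) h
      _ = (μ G).toReal + (μ Gᶜ).toReal := h2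
  linarith
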